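/- arXiv:1007.5421 — 5 statements merged into one kernel-verified Lean document; each statement's English description precedes it below -/
import Mathlib

section
/- If each transition and emission distribution of an HMM sums to 1, then for any constraint C and any fixed run length n, the total probability of all CHMM runs of length n is at most 1, with equality if and only if C holds on every HMM run of length n that has positive probability. -/
def runProb {S A : Type} (T : S → S → ℝ) (Em : S → A → ℝ) (n : ℕ)
    (st : Fin (n + 1) → S) (e : Fin n → A) : ℝ :=
  ∏ i : Fin n, T (st i.castSucc) (st i.succ) * Em (st i.succ) (e i)

/-- `r` (a choice of states after the initial state `s0`, together with emissions)
is a run of the HMM: all used transition and emission probabilities are strictly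
positive (equivalently, the run has positive probability). -/
def IsRunQ {S A : Type} (s0 : S) (T : S → S → ℝ) (Em : S → A → ℝ) (n : ℕ)
    (r : (Fin n → S) × (Fin n → A)) : Prop :=
  (∀ i : Fin n, 0 < T (Fin.cases s0 r.1 i.castSucc) (r.1 i)) ∧
    ∀ i : Fin n, 0 < Em (r.1 i) (r.2 i)

lemma runProb_cons {S A : Type} (T : S → S → ℝ) (Em : S → A → ℝ) (n : ℕ)
    (s0 s1 : S) (t : Fin n → S) (a1 : A) (e : Fin n → A) :
    runProb T Em (n+1) (Fin.cases s0 (Fin.cons s1 t)) (Fin.cons a1 e)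
      = T s0 s1 * Em s1 a1 * runProb T Em n (Fin.cases s1 t) e := by
  unfold runProb
  rw [Fin.prod_univ_succ]
  have main : ∀ i : Fin n,
      T (Fin.cases s0 (Fin.cons s1 t) (Fin.succ i).castSucc)
          (Fin.cases s0 (Fin.cons s1 t) (Fin.succ i).succ) *
        Em (Fin.cases s0 (Fin.cons s1 t) (Fin.succ i).succ) ((Fin.cons a1 e : Fin (n+1) → A) (Fin.succ i))
      = T (Fin.cases s1 t i.castSucc) (Fin.cases s1 t i.succ) *
          Em (Fin.cases s1 t i.succ) (e i) := by
    intro i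
    have h1 : (Fin.succ i).castSucc = (Fin.castSucc i).succ := (Fin.succ_castSucc i).symm
    rw [h1]
    have hc : (Fin.cons s1 t : Fin (n+1) → S) = fun j => Fin.cases s1 t j := rfl
    simp [Fin.cases_succ, Fin.cons_succ, hc]
  rw [Finset.prod_congr rfl (fun i _ => main i)]
  have h2 : Fin.cases s0 (Fin.cons s1 t) (1 : Fin (n+2)) = s1 := rfl
  simp [mul_assoc, h2]

lemma total_eq_one {S A : Type} [Fintype S] [Fintype A]
    (T : S → S → ℝ) (Em : S → A → ℝ)
    (hT1 : ∀ s : S, ∑ s' : S, T s s' = 1) (hE1 : ∀ s : S, ∑ a : A, Em s a = 1) :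
    ∀ (n : ℕ) (s0 : S),
      ∑ r : (Fin n → S) × (Fin n → A), runProb T Em n (Fin.cases s0 r.1) r.2 = 1 := by
  intro n
  induction n with
  | zero => intro s0; simp [runProb]
  | succ n ih =>
    intro s0
    rw [Fintype.sum_prod_type]
    rw [← (Fin.consEquiv (fun _ : Fin (n+1) => S)).sum_comp
      (fun f => ∑ e : Fin (n+1) → A, runProb T Em (n+1) (Fin.cases s0 f) e)]
    rw [Fintype.sum_prod_type]
    calc ∑ s1 : S, ∑ t : Fin n → S, ∑ e : Fin (n+1) → A,
          runProb T Em (n+1) (Fin.cases s0 (Fin.consEquiv _ (s1, t))) e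
        = ∑ s1 : S, T s0 s1 := by
          apply Finset.sum_congr rfl; intro s1 _
          calc ∑ t : Fin n → S, ∑ e : Fin (n+1) → A,
                runProb T Em (n+1) (Fin.cases s0 (Fin.consEquiv _ (s1, t))) e
              = ∑ t : Fin n → S, ∑ p : A × (Fin n → A),
                  T s0 s1 * Em s1 p.1 * runProb T Em n (Fin.cases s1 t) p.2 := by
                apply Finset.sum_congr rfl; intro t _
                rw [← (Fin.consEquiv (fun _ : Fin (n+1) => A)).sum_comp]
                apply Finset.sum_congr rfl; intro p _
                exact runProb_cons T Em n s0 s1 t p.1 p.2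
            _ = T s0 s1 := by
                rw [Finset.sum_comm]
                rw [Fintype.sum_prod_type]
                have key : ∀ a1 : A, ∑ e : Fin n → A, ∑ t : Fin n → S,
                    T s0 s1 * Em s1 a1 * runProb T Em n (Fin.cases s1 t) e
                    = T s0 s1 * Em s1 a1 := by
                  intro a1
                  simp only [← Finset.mul_sum]
                  have := ih s1
                  rw [Fintype.sum_prod_type, Finset.sum_comm] at this
                  rw [this, mul_one]
                simp only [key]
                rw [← Finset.mul_sum, hE1, mul_one]
      _ = 1 := hT1 s0

-- STATEMENT 3: if each transition and emission distribution sums to 1 then, for any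
-- constraint C and fixed run length n, the total probability of all CHMM runs of
-- length n is at most 1, with equality iff C holds on every positive-probability
open Classical in
theorem chmm_total_prob_le_one_iff {S A : Type} [Fintype S] [Fintype A]
    (s0 : S) (T : S → S → ℝ) (Em : S → A → ℝ) (n : ℕ)
    (hT0 : ∀ s s' : S, 0 ≤ T s s') (hE0 : ∀ (s : S) (a : A), 0 ≤ Em s a)
    (hT1 : ∀ s : S, ∑ s' : S, T s s' = 1) (hE1 : ∀ s : S, ∑ a : A, Em s a = 1)
    (C : (Fin n → S) × (Fin n → A) → Prop) :
    ∑ r ∈ Finset.univ.filter (fun r => IsRunQ s0 T Em n r ∧ C r),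
        runProb T Em n (Fin.cases s0 r.1) r.2 ≤ 1 ∧
    ((∑ r ∈ Finset.univ.filter (fun r => IsRunQ s0 T Em n r ∧ C r),
        runProb T Em n (Fin.cases s0 r.1) r.2) = 1 ↔
      ∀ r : (Fin n → S) × (Fin n → A), IsRunQ s0 T Em n r → C r) := by
  set P : (Fin n → S) × (Fin n → A) → ℝ :=
    fun r => runProb T Em n (Fin.cases s0 r.1) r.2 with hP
  have hnn : ∀ r, 0 ≤ P r := by
    intro r
    apply Finset.prod_nonneg
    intro i _
    exact mul_nonneg (hT0 _ _) (hE0 _ _)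
  have hposP : ∀ r, IsRunQ s0 T Em n r → 0 < P r := by
    intro r hr
    apply Finset.prod_pos
    intro i _
    simp only [Fin.cases_succ]
    exact mul_pos (hr.1 i) (hr.2 i)
  have hzero : ∀ r, ¬ IsRunQ s0 T Em n r → P r = 0 := by
    intro r hr
    by_cases hTall : ∀ i : Fin n, 0 < T (Fin.cases s0 r.1 i.castSucc) (r.1 i)
    case neg =>
      push_neg at hTall
      obtain ⟨i, hi⟩ := hTall
      apply Finset.prod_eq_zero (Finset.mem_univ i)
      have : T (Fin.cases s0 r.1 i.castSucc) (r.1 i) = 0 :=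
        le_antisymm hi (hT0 _ _)
      simp only [Fin.cases_succ]
      rw [this, zero_mul]
    case pos =>
      have hEex : ∃ i : Fin n, ¬ 0 < Em (r.1 i) (r.2 i) := by
        by_contra hc
        push_neg at hc
        exact hr ⟨hTall, hc⟩
      obtain ⟨i, hi⟩ := hEex
      apply Finset.prod_eq_zero (Finset.mem_univ i)
      have : Em (r.1 i) (r.2 i) = 0 := le_antisymm (not_lt.mp hi) (hE0 _ _)
      simp only [Fin.cases_succ]
      rw [this, mul_zero]
  set F := Finset.univ.filter (fun r => IsRunQ s0 T Em n r ∧ C r) with hF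
  set G := Finset.univ.filter (fun r => IsRunQ s0 T Em n r) with hG
  have hGsum : ∑ r ∈ G, P r = 1 := by
    rw [hG, Finset.sum_filter_of_ne]
    · exact total_eq_one T Em hT1 hE1 n s0
    · intro r _ hne
      by_contra hc
      exact hne (hzero r hc)
  have hsub : F ⊆ G := by
    intro r hr
    rw [hF, Finset.mem_filter] at hr
    rw [hG, Finset.mem_filter]
    exact ⟨hr.1, hr.2.1⟩
  have hle : ∑ r ∈ F, P r ≤ 1 := by
    rw [← hGsum]
    exact Finset.sum_le_sum_of_subset_of_nonneg hsub (fun r _ _ => hnn r)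
  refine ⟨hle, ?_, ?_⟩
  · intro h r hr
    by_contra hC
    have hrG : r ∈ G := by rw [hG, Finset.mem_filter]; exact ⟨Finset.mem_univ r, hr⟩
    have hrF : r ∉ F := by
      rw [hF, Finset.mem_filter]
      intro h'
      exact hC h'.2.2
    have hlt : ∑ x ∈ F, P x < ∑ x ∈ G, P x :=
      Finset.sum_lt_sum_of_subset hsub hrG hrF (hposP r hr) (fun j _ _ => hnn j)
    rw [h, hGsum] at hlt
    exact lt_irrefl 1 hlt
  · intro h
    have : F = G := by
      rw [hF, hG]
      apply Finset.filter_congr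
      intro r _
      constructor
      · exact fun h' => h'.1
      · exact fun h' => ⟨h', h r h'⟩
    rw [this, hGsum]
end

section
/- Soundness of the constrained pruning rule: let π and π' be two partial paths of the same length i+1 ending in the same state s, with accumulated probabilities p ≥ p', and suppose every completion (suffix path of states and emissions) that extends π' into a full constrained run of length n also extends π into a full constrained run. Then the maximal probability of a full constrained run with prefix π' is at most the maximal probability of a full constrained run with prefix π; hence removing π' preserves the existence of a most probable constrained path. -/
-- STATEMENT 5: soundness of the constrained pruning rule.  Two partial paths of the
-- same length end in the same state `s`, with accumulated probabilities `p ≥ p' ≥ 0`.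
-- `Valid` (resp. `Valid'`) is the set of suffixes (of the remaining `k` states, with
-- remaining emissions `e'`) that extend the first (resp. second) partial path into a
-- full constrained run; every completion of the second extends the first
-- (`Valid' ⊆ Valid`).  The probability of a full run is the accumulated prefix
-- probability times the suffix factor `runProb T Em k (Fin.cases s τ) e'`, which
-- depends only on `s` and the suffix.  Then the maximal probability of a full
-- constrained run with the second prefix is at most that with the first prefix.
theorem prune_sound {S A : Type} [Fintype S]
    (T : S → S → ℝ) (Em : S → A → ℝ)
    (hT0 : ∀ s s' : S, 0 ≤ T s s') (hE0 : ∀ (s : S) (a : A), 0 ≤ Em s a)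
    (k : ℕ) (e' : Fin k → A) (s : S)
    (p p' : ℝ) (hp'0 : 0 ≤ p') (hle : p' ≤ p)
    (Valid Valid' : Set (Fin k → S)) (hsub : Valid' ⊆ Valid) :
    sSup ((fun τ => p' * runProb T Em k (Fin.cases s τ) e') '' Valid')
      ≤ sSup ((fun τ => p * runProb T Em k (Fin.cases s τ) e') '' Valid) := by
  classical
  have hr0 : ∀ τ : Fin k → S, 0 ≤ runProb T Em k (Fin.cases s τ) e' := by
    intro τ
    exact Finset.prod_nonneg fun i _ => mul_nonneg (hT0 _ _) (hE0 _ _)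
  have hfin : ((fun τ => p * runProb T Em k (Fin.cases s τ) e') '' Valid).Finite :=
    (Set.toFinite Valid).image _
  have hbdd : BddAbove ((fun τ => p * runProb T Em k (Fin.cases s τ) e') '' Valid) :=
    hfin.bddAbove
  rcases Set.eq_empty_or_nonempty Valid' with h' | h'
  · simp only [h', Set.image_empty, Real.sSup_empty]
    rcases Set.eq_empty_or_nonempty Valid with h | ⟨τ, hτ⟩
    · simp [h]
    · exact le_csSup_of_le hbdd ⟨τ, hτ, rfl⟩
        (mul_nonneg (hp'0.trans hle) (hr0 τ))
  · apply Real.sSup_le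
    · rintro x ⟨τ, hτ, rfl⟩
      exact le_csSup_of_le hbdd ⟨τ, hsub hτ, rfl⟩
        (mul_le_mul_of_nonneg_right hle (hr0 τ))
    · obtain ⟨τ, hτ⟩ := h'
      exact le_csSup_of_le hbdd ⟨τ, hsub hτ, rfl⟩
        (mul_nonneg (hp'0.trans hle) (hr0 τ))
end

section
/- Correctness of constrained Viterbi via decomposable constraints: suppose the constraint C is prefix-closed in the sense that there is a monotone satisfiability predicate sat on (partial path, index) pairs such that C holds on a full path iff sat holds at every index, and sat at index i+1 depends only on sat at index i and the (i+1)-st state. Define V_C(i, σ, s) as the maximal accumulated probability over partial paths of length i ending in s with constraint-state σ. Then the maximum of V_C(n, σ_acc, s) over states s and accepting constraint-states σ_acc equals the maximal probability of any full constrained run for the observation. -/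
/-- Accumulated probability of a (partial or full) path `π` from current state `s`,
consuming the emissions `es` (zero if the lengths mismatch). -/
def accProb {S A : Type} (T : S → S → ℝ) (Em : S → A → ℝ) :
    S → List S → List A → ℝ
  | _, [], [] => 1
  | s, s' :: π, a :: es => T s s' * Em s' a * accProb T Em s' π es
  | _, _, _ => 0

/-- Run the deterministic constraint automaton `δ` from `σ0` along a path/observation
pair; `none` represents failure. -/
def autRun {Q S A : Type} (δ : Q → S → A → Option Q) (σ0 : Q)
    (l : List (S × A)) : Option Q :=
  l.foldl (fun oσ u => oσ.bind fun σ => δ σ u.1 u.2) (some σ0)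

/-- `VC obs i σ s` = maximal accumulated probability over partial paths of length `i`
ending in HMM state `s` (the empty path ends in `s0`) whose constraint-automaton state
is `σ`; `0` if no such path exists. -/
noncomputable def VC {Q S A : Type} (T : S → S → ℝ) (Em : S → A → ℝ)
    (δ : Q → S → A → Option Q) (σ0 : Q) (s0 : S)
    (obs : List A) (i : ℕ) (σ : Q) (s : S) : ℝ :=
  sSup ({0} ∪ {x | ∃ π : List S, π.length = i ∧ π.getLastD s0 = s ∧
    autRun δ σ0 (π.zip (obs.take i)) = some σ ∧
    x = accProb T Em s0 π (obs.take i)})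

-- STATEMENT 8: correctness of constrained Viterbi for constraints given by a
-- deterministic automaton (a decomposable, prefix-closed constraint): the maximum of
-- V_C(n, σ_acc, s) over states s and accepting constraint-states σ_acc equals the
-- maximal probability of a full constrained run for the observation.
theorem constrained_viterbi_correct {Q S A : Type} [Fintype S] [Fintype Q]
    (T : S → S → ℝ) (Em : S → A → ℝ)
    (hT0 : ∀ s s' : S, 0 ≤ T s s') (hE0 : ∀ (s : S) (a : A), 0 ≤ Em s a)
    (δ : Q → S → A → Option Q) (σ0 : Q) (F : Set Q) (s0 : S)
    (obs : List A) :
    sSup ({0} ∪ {x | ∃ (s : S) (σacc : Q), σacc ∈ F ∧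
        x = VC T Em δ σ0 s0 obs obs.length σacc s}) =
      sSup ({0} ∪ {x | ∃ π : List S, π.length = obs.length ∧
        (∃ σacc ∈ F, autRun δ σ0 (π.zip obs) = some σacc) ∧
        x = accProb T Em s0 π obs}) := by
  set n := obs.length with hn
  have htake : obs.take n = obs := List.take_length
  -- The master finite set
  set K : Set ℝ := insert 0 ((fun π => accProb T Em s0 π obs) '' {π : List S | π.length = n}) with hK
  have hKfin : K.Finite := (Set.Finite.image _ (List.finite_length_eq S n)).insert 0
  have hKbdd : BddAbove K := hKfin.bddAbove
  have hK0 : (0:ℝ) ∈ K := Set.mem_insert _ _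
  -- Pset
  have hPsub : ∀ σ s, ({0} ∪ {x | ∃ π : List S, π.length = n ∧ π.getLastD s0 = s ∧
      autRun δ σ0 (π.zip (obs.take n)) = some σ ∧
      x = accProb T Em s0 π (obs.take n)}) ⊆ K := by
    rintro σ s x (hx | ⟨π, h1, h2, h3, h4⟩)
    · simp at hx; simp [hK, hx]
    · right; exact ⟨π, h1, by rw [h4, htake]⟩
  set L : Set ℝ := {0} ∪ {x | ∃ (s : S) (σacc : Q), σacc ∈ F ∧
      x = VC T Em δ σ0 s0 obs n σacc s} with hL
  set R : Set ℝ := {0} ∪ {x | ∃ π : List S, π.length = n ∧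
      (∃ σacc ∈ F, autRun δ σ0 (π.zip obs) = some σacc) ∧
      x = accProb T Em s0 π obs} with hR
  have hRsub : R ⊆ K := by
    rintro x (hx | ⟨π, h1, h2, h4⟩)
    · simp at hx; simp [hK, hx]
    · right; exact ⟨π, h1, h4.symm⟩
  have hRbdd : BddAbove R := hKbdd.mono hRsub
  have hVCle : ∀ σ s, σ ∈ F → VC T Em δ σ0 s0 obs n σ s ≤ sSup R := by
    intro σ s hσ
    apply csSup_le (by exact ⟨0, Or.inl rfl⟩)
    rintro x (hx | ⟨π, h1, h2, h3, h4⟩)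
    · simp at hx; subst hx; exact le_csSup hRbdd (Or.inl rfl)
    · refine le_csSup hRbdd (Or.inr ⟨π, h1, ⟨σ, hσ, by rwa [htake] at h3⟩, by rwa [htake] at h4⟩)
  have hLbdd : BddAbove L := by
    refine ⟨sSup K, ?_⟩
    rintro x (hx | ⟨s, σ, hσ, rfl⟩)
    · simp at hx; subst hx; exact le_csSup hKbdd hK0
    · exact csSup_le (⟨0, Or.inl rfl⟩) fun y hy => le_csSup hKbdd (hPsub σ s hy)
  apply le_antisymm
  · refine csSup_le ⟨0, Or.inl rfl⟩ ?_
    rintro x (hx | ⟨s, σ, hσ, rfl⟩)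
    · simp at hx; subst hx; exact le_csSup hRbdd (Or.inl rfl)
    · exact hVCle σ s hσ
  · refine csSup_le ⟨0, Or.inl rfl⟩ ?_
    rintro x (hx | ⟨π, h1, ⟨σ, hσ, h3⟩, h4⟩)
    · simp at hx; subst hx; exact le_csSup hLbdd (Or.inl rfl)
    · have hx1 : x ≤ VC T Em δ σ0 s0 obs n σ (π.getLastD s0) := by
        apply le_csSup (hKbdd.mono (hPsub σ (π.getLastD s0)))
        exact Or.inr ⟨π, h1, rfl, by rwa [htake], by rwa [htake]⟩
      exact hx1.trans (le_csSup hLbdd (Or.inr ⟨π.getLastD s0, σ, hσ, rfl⟩))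
end

section
/- Incremental correctness of the cardinality_atmost checker: the incremental checker that maintains a counter, increments it on each occurrence of the designated value and fails when the counter exceeds Max, accepts a sequence (processed element by element) if and only if the sequence contains at most Max occurrences of the designated value; moreover it fails on a prefix iff no extension of that prefix can satisfy the constraint. -/
/-- One step of the incremental cardinality_atmost checker: the store is a counter,
incremented on each occurrence of the designated value `X`, failing when the counter
would exceed `Max`. -/
def cardStep {α : Type} [DecidableEq α] (X : α) (Max : ℕ) (c : ℕ) (u : α) :
    Option ℕ :=
  if u = X then (if c + 1 ≤ Max then some (c + 1) else none) else some c

/-- Process a list element by element, folding the checker from store `c`. -/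
def runChecker {α : Type} [DecidableEq α] (X : α) (Max : ℕ) (c : ℕ) (L : List α) :
    Option ℕ :=
  L.foldl (fun oc u => oc.bind fun c' => cardStep X Max c' u) (some c)

lemma foldl_none {α : Type} [DecidableEq α] (X : α) (Max : ℕ) (L : List α) :
    L.foldl (fun oc u => oc.bind fun c' => cardStep X Max c' u) none = none := by
  induction L with
  | nil => rfl
  | cons a t ih => simpa using ih

lemma runChecker_cons {α : Type} [DecidableEq α] (X : α) (Max c : ℕ) (a : α)
    (t : List α) :
    runChecker X Max c (a :: t) =
      (cardStep X Max c a).bind (fun c' => runChecker X Max c' t) := by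
  cases h : cardStep X Max c a with
  | none => simp [runChecker, h, foldl_none]
  | some c' => simp [runChecker, h]

lemma runChecker_eval {α : Type} [DecidableEq α] (X : α) (Max : ℕ) :
    ∀ (L : List α) (c : ℕ), c ≤ Max →
      runChecker X Max c L =
        if c + L.count X ≤ Max then some (c + L.count X) else none := by
  intro L
  induction L with
  | nil => intro c hc; simp [runChecker, hc]
  | cons a t ih =>
    intro c hc
    rw [runChecker_cons]
    by_cases h : a = X
    · subst h
      by_cases h2 : c + 1 ≤ Max
      · rw [show cardStep a Max c a = some (c+1) by simp [cardStep, h2]]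
        simp only [Option.bind_some, ih (c+1) h2, List.count_cons_self]
        have : c + 1 + t.count a = c + (t.count a + 1) := by omega
        rw [this]
      · rw [show cardStep a Max c a = none by simp [cardStep, h2]]
        have : ¬ c + (a :: t).count a ≤ Max := by
          simp only [List.count_cons_self]; omega
        simp only [List.count_cons_self, Option.bind_none]
        rw [if_neg (by omega)]
    · rw [show cardStep X Max c a = some c by simp [cardStep, h]]
      simp [ih c hc, List.count_cons, h]

theorem cardinality_checker_correct {α : Type} [DecidableEq α]
    (X : α) (Max : ℕ) :
    (∀ L : List α, (runChecker X Max 0 L).isSome ↔ L.count X ≤ Max) ∧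
    (∀ P : List α, runChecker X Max 0 P = none ↔
      ∀ L' : List α, ¬ ((P ++ L').count X ≤ Max)) := by
  constructor
  · intro L
    rw [runChecker_eval X Max L 0 (Nat.zero_le _)]
    by_cases h : L.count X ≤ Max <;> simp [h]
  · intro P
    rw [runChecker_eval X Max P 0 (Nat.zero_le _)]
    constructor
    · intro h L'
      simp only [Nat.zero_add] at h
      split at h
      · exact absurd h (by simp)
      · rename_i hgt
        push_neg at hgt
        simp only [List.count_append]
        omega
    · intro h
      have := h []
      simp only [List.append_nil] at this
      have h2 : ¬ 0 + P.count X ≤ Max := by omega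
      simp only [if_neg h2]
end

section
/- Termination of the constrained Viterbi rewriting system: starting from the initial singleton set of 5-tuples, the rewriting system with rules trans_ctr (which only adds tuples with strictly larger index, bounded by n, and state from the finite set S) and prune_ctr (which removes tuples) terminates: no infinite sequence of rule applications exists when tuples are identified by (state, index, partial path) and partial paths have length bounded by n. -/
-- STATEMENT 17: termination of the constrained Viterbi rewriting system.  The tuples
-- ⟨s, i, p, π, σ⟩ (identified by (state, index ≤ n, partial path of bounded length),
-- finitely many in total) form a finite type `Tuple`.  A configuration is a pair
-- (Σ, Added) of the current set of tuples and the set of tuples added so far.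
-- trans_ctr adds a tuple that has never been added before (to both components);
-- prune_ctr removes tuples (strictly shrinking Σ).  Then there is no infinite
-- sequence of rule applications.
theorem constrained_viterbi_terminates {Tuple : Type} [Fintype Tuple]
    [DecidableEq Tuple]
    (Rel : Finset Tuple × Finset Tuple → Finset Tuple × Finset Tuple → Prop)
    (hRel : ∀ p q : Finset Tuple × Finset Tuple,
      Rel q p ↔
        (∃ t : Tuple, t ∉ p.2 ∧ q.1 = insert t p.1 ∧ q.2 = insert t p.2) ∨
        (q.1 ⊂ p.1 ∧ q.2 = p.2)) :
    ¬ ∃ f : ℕ → Finset Tuple × Finset Tuple, ∀ k : ℕ, Rel (f (k + 1)) (f k) := by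
  rintro ⟨f, hf⟩
  set N := Fintype.card Tuple with hN
  set μ : Finset Tuple × Finset Tuple → ℕ :=
    fun p => (N - p.2.card) * (N + 1) + p.1.card with hμ
  have hdec : ∀ k, μ (f (k + 1)) < μ (f k) := by
    intro k
    have h := (hRel (f k) (f (k + 1))).mp (hf k)
    rcases h with ⟨t, ht, h1, h2⟩ | ⟨h1, h2⟩
    · have hc2 : (f (k+1)).2.card = (f k).2.card + 1 := by
        rw [h2, Finset.card_insert_of_notMem ht]
      have hle2 : (f k).2.card + 1 ≤ N := by
        rw [← hc2]; exact Finset.card_le_univ _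
      have hle1 : (f (k+1)).1.card ≤ N := Finset.card_le_univ _
      simp only [hμ, hc2]
      have : N - ((f k).2.card + 1) + 1 = N - (f k).2.card := by omega
      calc (N - ((f k).2.card + 1)) * (N + 1) + (f (k+1)).1.card
          ≤ (N - ((f k).2.card + 1)) * (N + 1) + N := by omega
        _ < (N - ((f k).2.card + 1) + 1) * (N + 1) := by ring_nf; omega
        _ = (N - (f k).2.card) * (N + 1) := by rw [this]
        _ ≤ (N - (f k).2.card) * (N + 1) + (f k).1.card := by omega
    · have hc1 : (f (k+1)).1.card < (f k).1.card := Finset.card_lt_card h1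
      simp only [hμ, h2]
      omega
  have hbound : ∀ k, μ (f k) + k ≤ μ (f 0) := by
    intro k
    induction k with
    | zero => omega
    | succ n ih => have := hdec n; omega
  have := hbound (μ (f 0) + 1)
  omega
end
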